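/- Let A and Ã be real symmetric positive definite n×n matrices, let β := A^{-1/2}(Ã − A)A^{-1/2} and Q := (β + 2I)⁻¹β. Then all eigenvalues of β are strictly greater than −1, β + 2I is invertible, Q is symmetric, and the operator norm of Q satisfies ‖Q‖ < 1. -/

import Mathlib

open Matrix

open scoped ComplexOrder in
noncomputable def Matrix.PosSemidef.sqrt {m 𝕜 : Type*} [Fintype m] [DecidableEq m] [RCLike 𝕜]
    {A : Matrix m m 𝕜} (hA : A.PosSemidef) : Matrix m m 𝕜 :=
  (hA.1.eigenvectorUnitary : Matrix m m 𝕜) * diagonal ((↑) ∘ (√·) ∘ hA.1.eigenvalues) *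
    (star hA.1.eigenvectorUnitary : Matrix m m 𝕜)

private lemma aux_sqrt_psd {n : ℕ} {A : Matrix (Fin n) (Fin n) ℝ} (hA : A.PosSemidef) :
    hA.sqrt.PosSemidef := by
  unfold Matrix.PosSemidef.sqrt
  have hd : (diagonal ((RCLike.ofReal : ℝ → ℝ) ∘ (√·) ∘ hA.1.eigenvalues) : Matrix (Fin n) (Fin n) ℝ).PosSemidef :=
    PosSemidef.diagonal (fun i => by simp [Real.sqrt_nonneg])
  have := hd.mul_mul_conjTranspose_same (hA.1.eigenvectorUnitary : Matrix (Fin n) (Fin n) ℝ)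
  simpa only [Unitary.coe_star, Matrix.star_eq_conjTranspose] using this

private lemma aux_sqrt_mul_self {n : ℕ} {A : Matrix (Fin n) (Fin n) ℝ} (hA : A.PosSemidef) :
    hA.sqrt * hA.sqrt = A := by
  unfold Matrix.PosSemidef.sqrt
  set U : Matrix (Fin n) (Fin n) ℝ := (hA.1.eigenvectorUnitary : Matrix (Fin n) (Fin n) ℝ) with hUdef
  have hU : star U * U = 1 := by
    rw [hUdef, ← Unitary.coe_star]; exact Unitary.coe_star_mul_self _
  have hDD : (diagonal ((RCLike.ofReal : ℝ → ℝ) ∘ (√·) ∘ hA.1.eigenvalues) : Matrix (Fin n) (Fin n) ℝ) *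
      diagonal ((RCLike.ofReal : ℝ → ℝ) ∘ (√·) ∘ hA.1.eigenvalues) = diagonal (RCLike.ofReal ∘ hA.1.eigenvalues) := by
    rw [diagonal_mul_diagonal]
    congr 1
    funext i
    simp [Real.mul_self_sqrt (hA.eigenvalues_nonneg i)]
  conv_rhs => rw [hA.1.spectral_theorem]
  rw [Unitary.conjStarAlgAut_apply, ← hDD]
  simp only [Unitary.coe_star, Matrix.mul_assoc]
  rw [← Matrix.mul_assoc _ U, hU, Matrix.one_mul]

private lemma aux_posDef_conj {n : ℕ} {B M : Matrix (Fin n) (Fin n) ℝ} (hB : B.PosDef)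
    (hM : IsUnit M.det) : (Mᴴ * B * M).PosDef := by
  refine PosDef.of_dotProduct_mulVec_pos (Matrix.isHermitian_conjTranspose_mul_mul M hB.1) fun x hx => ?_
  have hinj := Matrix.mulVec_injective_iff_isUnit.mpr ((Matrix.isUnit_iff_isUnit_det M).mpr hM)
  have hx' : M *ᵥ x ≠ 0 := fun h => hx (hinj (by simpa using h))
  simpa only [star_mulVec, dotProduct_mulVec, vecMul_vecMul] using hB.dotProduct_mulVec_pos hx'

private lemma aux_isUnit_smul_one {n : ℕ} {c : ℝ} (hc : c ≠ 0) :
    IsUnit (c • (1 : Matrix (Fin n) (Fin n) ℝ)) := by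
  simpa [Units.smul_def] using
    (isUnit_one (M := Matrix (Fin n) (Fin n) ℝ)).smul (Units.mk0 c hc)

private lemma aux_posSemidef_smul_one {n : ℕ} {c : ℝ} (hc : 0 ≤ c) :
    ((c • 1 : Matrix (Fin n) (Fin n) ℝ)).PosSemidef := by
  rw [smul_one_eq_diagonal]
  exact posSemidef_diagonal_iff.mpr (fun _ => hc)

/-- For real symmetric positive definite matrices `A, At` (`At` playing the role of `Ã`), with
`β := A^{-1/2}(At − A)A^{-1/2}` and `Q := (β + 2I)⁻¹β`: all eigenvalues of `β` are `> −1`,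
`β + 2I` is invertible, `Q` is symmetric, and the (spectral) operator norm of `Q` is `< 1`. -/
theorem contrast_matrix_Q_properties
    {n : ℕ} (A At : Matrix (Fin n) (Fin n) ℝ)
    (hA : A.PosDef) (hAt : At.PosDef) (hAs : A.IsSymm) (hAts : At.IsSymm) :
    ∀ β Q : Matrix (Fin n) (Fin n) ℝ,
      β = (hA.posSemidef.sqrt)⁻¹ * (At - A) * (hA.posSemidef.sqrt)⁻¹ →
      Q = (β + 2)⁻¹ * β →
      (∀ μ ∈ spectrum ℝ β, -1 < μ) ∧
      IsUnit (β + 2) ∧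
      Q.IsSymm ∧
      ‖Matrix.toEuclideanCLM (𝕜 := ℝ) Q‖ < 1 := by
  intro β Q hβ hQdef
  set S := hA.posSemidef.sqrt with hSdef
  have hSps : S.PosSemidef := aux_sqrt_psd hA.posSemidef
  have hSH : S.IsHermitian := hSps.1
  have hSS : S * S = A := aux_sqrt_mul_self hA.posSemidef
  have hSdet : IsUnit S.det := by
    have hd : S.det * S.det = A.det := by rw [← det_mul, hSS]
    have hApos := hA.det_pos
    have : S.det ≠ 0 := by intro h; rw [h, mul_zero] at hd; linarith
    exact this.isUnit
  have hSHinv : ((S⁻¹)ᴴ : Matrix (Fin n) (Fin n) ℝ) = S⁻¹ := by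
    rw [conjTranspose_nonsing_inv, hSH.eq]
  have hSinvdet : IsUnit (S⁻¹).det := S.isUnit_nonsing_inv_det hSdet
  -- C = S⁻¹ At S⁻¹ is positive definite
  have hCpd : (S⁻¹ * At * S⁻¹).PosDef := by
    have := aux_posDef_conj hAt hSinvdet
    rwa [hSHinv] at this
  -- S⁻¹ A S⁻¹ = 1
  have hid : S⁻¹ * A * S⁻¹ = 1 := by
    rw [← hSS, ← Matrix.mul_assoc, Matrix.nonsing_inv_mul _ hSdet, Matrix.one_mul,
      Matrix.mul_nonsing_inv _ hSdet]
  have hβC : β = S⁻¹ * At * S⁻¹ - 1 := by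
    rw [hβ, Matrix.mul_sub, Matrix.sub_mul, hid]
  -- Part 1: spectrum of β
  have h1 : ∀ μ ∈ spectrum ℝ β, -1 < μ := by
    intro μ hμ
    by_contra hle
    push_neg at hle
    rw [spectrum.mem_iff] at hμ
    apply hμ
    have hrw : algebraMap ℝ (Matrix (Fin n) (Fin n) ℝ) μ - β
        = -((S⁻¹ * At * S⁻¹) + (-(μ+1)) • (1 : Matrix (Fin n) (Fin n) ℝ)) := by
      rw [Algebra.algebraMap_eq_smul_one, hβC]
      module
    rw [hrw]
    exact (hCpd.add_posSemidef (aux_posSemidef_smul_one (by linarith))).isUnit.neg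
  -- Part 2: β + 2 is a unit
  have h2cast : (2 : Matrix (Fin n) (Fin n) ℝ) = (2:ℝ) • 1 := by
    rw [two_smul, one_add_one_eq_two]
  have hβ2 : β + 2 = (S⁻¹ * At * S⁻¹) + 1 := by
    rw [hβC, h2cast]
    module
  have h2pd : (β + 2).PosDef := by
    rw [hβ2]
    exact hCpd.add_posSemidef Matrix.PosSemidef.one
  have h2 : IsUnit (β + 2) := h2pd.isUnit
  have hdet2 : IsUnit (β + 2).det := (Matrix.isUnit_iff_isUnit_det _).mp h2
  -- symmetry facts
  have hβH : β.IsHermitian := by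
    rw [hβC]
    exact hCpd.1.sub isHermitian_one
  have h2H : (β + 2).IsHermitian := by
    rw [hβ2]
    exact hCpd.1.add isHermitian_one
  -- Part 3: Q symmetric
  have hcomm : (β + 2)⁻¹ * β = β * (β + 2)⁻¹ := by
    have h0 : β * (β + 2) = (β + 2) * β := by noncomm_ring
    calc (β+2)⁻¹ * β = (β+2)⁻¹ * (β * ((β+2) * (β+2)⁻¹)) := by
          rw [Matrix.mul_nonsing_inv _ hdet2, Matrix.mul_one]
      _ = (β+2)⁻¹ * ((β+2) * (β * (β+2)⁻¹)) := by
          rw [← Matrix.mul_assoc β, h0, Matrix.mul_assoc]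
      _ = β * (β+2)⁻¹ := by
          rw [← Matrix.mul_assoc, Matrix.nonsing_inv_mul _ hdet2, Matrix.one_mul]
  have hQH : Q.IsHermitian := by
    rw [Matrix.IsHermitian, hQdef, conjTranspose_mul, conjTranspose_nonsing_inv, h2H.eq,
      hβH.eq, ← hcomm]
  have hQsymm : Q.IsSymm := by
    rw [Matrix.IsSymm, ← conjTranspose_eq_transpose_of_trivial, hQH.eq]
  -- spectrum of Q
  have hinvu : IsUnit ((β + 2)⁻¹) := h2pd.inv.isUnit
  have hspecQ : ∀ μ ∈ spectrum ℝ Q, -1 < μ ∧ μ < 1 := by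
    intro μ hμ
    rw [spectrum.mem_iff] at hμ
    have hfacQ : (β+2) * Q = β := by
      rw [hQdef, ← Matrix.mul_assoc, Matrix.mul_nonsing_inv _ hdet2, Matrix.one_mul]
    have hfac : (β+2) * (algebraMap ℝ (Matrix (Fin n) (Fin n) ℝ) μ - Q)
        = (μ - 1) • β + (2*μ) • 1 := by
      rw [Matrix.mul_sub, hfacQ, Algebra.algebraMap_eq_smul_one, mul_smul_comm,
        Matrix.mul_one, h2cast]
      module
    have hkey : algebraMap ℝ (Matrix (Fin n) (Fin n) ℝ) μ - Q
        = (β+2)⁻¹ * ((μ - 1) • β + (2*μ) • 1) := by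
      rw [← hfac, ← Matrix.mul_assoc, Matrix.nonsing_inv_mul _ hdet2, Matrix.one_mul]
    have hnotunit : ¬ IsUnit ((μ - 1) • β + (2*μ) • (1 : Matrix (Fin n) (Fin n) ℝ)) := by
      intro hu
      exact hμ (hkey ▸ (hinvu.mul hu))
    have hμne : μ ≠ 1 := by
      rintro rfl
      apply hnotunit
      have : ((1:ℝ) - 1) • β + (2*1 : ℝ) • (1 : Matrix (Fin n) (Fin n) ℝ)
          = (2:ℝ) • (1 : Matrix (Fin n) (Fin n) ℝ) := by
        norm_num
      rw [this]
      exact aux_isUnit_smul_one two_ne_zero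
    set ν : ℝ := 2*μ/(1-μ) with hνdef
    have h1μ : 1 - μ ≠ 0 := fun h => hμne (by linarith)
    have hν : (μ - 1) * ν = -(2*μ) := by
      field_simp [hνdef]
      have h' : ν * (1 - μ) = 2*μ := by rw [hνdef, div_mul_cancel₀ _ h1μ]
      linear_combination -h'
    have hscal : (μ - 1) • β + (2*μ) • (1 : Matrix (Fin n) (Fin n) ℝ)
        = (μ - 1) • (β - ν • 1) := by
      rw [smul_sub, smul_smul, hν, neg_smul, sub_neg_eq_add]
    have hνspec : ν ∈ spectrum ℝ β := by
      rw [spectrum.mem_iff]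
      intro hu
      apply hnotunit
      rw [hscal]
      have hXu : IsUnit (β - ν • (1 : Matrix (Fin n) (Fin n) ℝ)) := by
        have := hu.neg
        rwa [Algebra.algebraMap_eq_smul_one, neg_sub] at this
      have hμ1 : (μ - 1) ≠ 0 := fun h => hμne (by linarith)
      have : (μ - 1) • (β - ν • (1 : Matrix (Fin n) (Fin n) ℝ))
          = ((μ - 1) • (1 : Matrix (Fin n) (Fin n) ℝ)) * (β - ν • 1) := by
        rw [smul_mul_assoc, Matrix.one_mul]
      rw [this]
      exact (aux_isUnit_smul_one hμ1).mul hXu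
    have hνgt : -1 < ν := h1 ν hνspec
    have hprod : ν * (1 - μ) = 2*μ := by
      field_simp [hνdef]
      rw [hνdef, div_mul_cancel₀ _ h1μ]; ring
    constructor
    · by_contra hcon
      push_neg at hcon
      nlinarith [mul_pos (by linarith : (0:ℝ) < ν + 1) (by linarith : (0:ℝ) < 1 - μ)]
    · by_contra hcon
      push_neg at hcon
      have hgt : 1 < μ := lt_of_le_of_ne hcon (Ne.symm hμne)
      nlinarith [mul_pos (by linarith : (0:ℝ) < ν + 1) (by linarith : (0:ℝ) < μ - 1)]
  refine ⟨h1, h2, hQsymm, ?_⟩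
  rcases Nat.eq_zero_or_pos n with hn | hn
  · subst hn
    have hQ0 : Q = 0 := by ext i j; exact i.elim0
    rw [hQ0, map_zero, norm_zero]
    norm_num
  · haveI : Nonempty (Fin n) := ⟨⟨0, hn⟩⟩
    set ev : Fin n → ℝ := hQH.eigenvalues with hev
    have hevlt : ∀ i, |ev i| < 1 := fun i => by
      have := hspecQ _ (hQH.eigenvalues_mem_spectrum_real i)
      rw [abs_lt]; exact ⟨this.1, this.2⟩
    set c : ℝ := Finset.univ.sup' Finset.univ_nonempty (fun i => |ev i|) with hc
    have hclt : c < 1 := by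
      rw [Finset.sup'_lt_iff]; exact fun i _ => hevlt i
    have hcle : ∀ i, |ev i| ≤ c := fun i => Finset.le_sup' (fun j => |ev j|) (Finset.mem_univ i)
    have hc0 : 0 ≤ c := le_trans (abs_nonneg _) (hcle (Classical.arbitrary _))
    have hsa : IsSelfAdjoint (toEuclideanCLM (𝕜 := ℝ) Q) := by
      have hstar : star Q = Q := by rw [Matrix.star_eq_conjTranspose, hQH.eq]
      rw [_root_.IsSelfAdjoint, ← map_star, hstar]
    have hsym := hsa.isSymmetric
    set T := toEuclideanCLM (𝕜 := ℝ) Q with hT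
    set b := hQH.eigenvectorBasis with hb
    have hTb : ∀ i, T (b i) = ev i • b i := by
      intro i
      apply (WithLp.equiv 2 ((Fin n) → ℝ)).injective
      exact hQH.mulVec_eigenvectorBasis i
    have hrepr : ∀ (x : EuclideanSpace ℝ (Fin n)) i, b.repr (T x) i = ev i * b.repr x i := by
      intro x i
      rw [b.repr_apply_apply, b.repr_apply_apply]
      calc (inner ℝ (b i) (T x) : ℝ) = inner ℝ (T (b i)) x := (hsym (b i) x).symm
        _ = ev i * inner ℝ (b i) x := by rw [hTb i, real_inner_smul_left]
    have hnorm_sq : ∀ (y : EuclideanSpace ℝ (Fin n)),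
        ‖y‖ = Real.sqrt (∑ i, (b.repr y i)^2) := by
      intro y
      rw [← b.repr.norm_map y, EuclideanSpace.norm_eq]
      simp [Real.norm_eq_abs, sq_abs]
    have hbound : ∀ x : EuclideanSpace ℝ (Fin n), ‖T x‖ ≤ c * ‖x‖ := by
      intro x
      rw [hnorm_sq (T x), hnorm_sq x]
      have hsum : ∑ i, (b.repr (T x) i)^2 ≤ c^2 * ∑ i, (b.repr x i)^2 := by
        rw [Finset.mul_sum]
        apply Finset.sum_le_sum
        intro i _
        rw [hrepr x i, mul_pow]
        have h1 : (ev i)^2 ≤ c^2 := by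
          have := hcle i
          nlinarith [abs_nonneg (ev i), sq_abs (ev i)]
        nlinarith [sq_nonneg (b.repr x i)]
      calc Real.sqrt (∑ i, (b.repr (T x) i)^2)
          ≤ Real.sqrt (c^2 * ∑ i, (b.repr x i)^2) := Real.sqrt_le_sqrt hsum
        _ = c * Real.sqrt (∑ i, (b.repr x i)^2) := by
            rw [Real.sqrt_mul (sq_nonneg c), Real.sqrt_sq hc0]
    have := ContinuousLinearMap.opNorm_le_bound T hc0 hbound
    calc ‖T‖ ≤ c := this
      _ < 1 := hclt
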